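/- For every m ≥ 0, the Cartan counterpart A(B_m) := (2δ_{ij} − |(B_m)_{ij}|) of the exchange matrix B_m equals the generalized Cartan matrix of type A^{(1)}_N, namely the (N+1)×(N+1) integer matrix C with C_{ii} = 2 for all i, C_{i,i+1} = C_{i+1,i} = −1 for 1 ≤ i ≤ N, C_{1,N+1} = C_{N+1,1} = −1, and all other entries 0. -/

import Mathlib

/-- The initial exchange matrix `B₀` of type `A^{(1)}_N` (indices `1, …, N+1`). -/
def b0 (N : ℕ) : ℕ → ℕ → ℤ := fun i j =>
  if 1 ≤ i ∧ i ≤ N ∧ j = i + 1 then -1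
  else if 2 ≤ i ∧ i ≤ N + 1 ∧ j + 1 = i then 1
  else if i = 1 ∧ j = N + 1 then -1
  else if i = N + 1 ∧ j = 1 then 1
  else 0

/-- Matrix mutation `μ_k` in direction `k`. -/
def bmut (k : ℕ) (B : ℕ → ℕ → ℤ) : ℕ → ℕ → ℤ := fun i j =>
  if i = k ∨ j = k then -B i j
  else B i j + max (-B i k) 0 * B k j + B i k * max (B k j) 0

/-- `Bseq N m` is the matrix obtained from `B₀` by applying `μ₁, μ₂, …, μ_{N+1}, μ₁, …`
cyclically, `m` times. -/
def Bseq (N : ℕ) : ℕ → ℕ → ℕ → ℤ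
  | 0 => b0 N
  | m + 1 => bmut (m % (N + 1) + 1) (Bseq N m)

/-- The generalized Cartan matrix of type `A^{(1)}_N` (indices `1, …, N+1`). -/
def cartanA (N : ℕ) : ℕ → ℕ → ℤ := fun i j =>
  if i = j then 2
  else if (1 ≤ i ∧ i ≤ N ∧ j = i + 1) ∨ (2 ≤ i ∧ i ≤ N + 1 ∧ j + 1 = i) ∨
          (i = 1 ∧ j = N + 1) ∨ (i = N + 1 ∧ j = 1) then -1
  else 0

def sg (r i : ℕ) : ℤ := if i ≤ r then -1 else 1

lemma sg_abs (r i : ℕ) : |sg r i| = 1 := by unfold sg; split_ifs <;> norm_num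

lemma sg_succ_self (r : ℕ) : sg (r+1) (r+1) = -1 := by unfold sg; simp

lemma sg_self_succ (r : ℕ) : sg r (r+1) = 1 := by unfold sg; simp [Nat.not_succ_le_self]

lemma sg_succ_ne (r y : ℕ) (h : y ≠ r+1) : sg (r+1) y = sg r y := by
  unfold sg; split_ifs <;> omega

lemma b0_diag (N i : ℕ) (hN : 2 ≤ N) : b0 N i i = 0 := by unfold b0; split_ifs <;> omega

lemma col_nonneg (N r : ℕ) (hN : 2 ≤ N) (hr : r ≤ N) (a : ℕ) :
    0 ≤ sg r a * sg r (r+1) * b0 N a (r+1) := by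
  unfold sg b0; split_ifs <;> (try norm_num) <;> omega

lemma row_nonpos (N r : ℕ) (hN : 2 ≤ N) (hr : r ≤ N) (b : ℕ) :
    sg r (r+1) * sg r b * b0 N (r+1) b ≤ 0 := by
  unfold sg b0; split_ifs <;> (try norm_num) <;> omega

lemma step (N r : ℕ) (hN : 2 ≤ N) (hr : r ≤ N) (i j : ℕ)
    (hi1 : 1 ≤ i) (hi2 : i ≤ N+1) (hj1 : 1 ≤ j) (hj2 : j ≤ N+1) :
    bmut (r+1) (fun a b => sg r a * sg r b * b0 N a b) i j
      = sg (r+1) i * sg (r+1) j * b0 N i j := by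
  simp only [bmut]
  split_ifs with h
  · rcases h with hi | hj
    · subst hi
      by_cases hj : j = r + 1
      · subst hj; rw [b0_diag N _ hN]; ring
      · rw [sg_succ_self, sg_self_succ, sg_succ_ne r j hj]; ring
    · subst hj
      by_cases hi : i = r + 1
      · subst hi; rw [b0_diag N _ hN]; ring
      · rw [sg_succ_self, sg_self_succ, sg_succ_ne r i hi]; ring
  · push_neg at h
    obtain ⟨hi, hj⟩ := h
    rw [max_eq_right (neg_nonpos.mpr (col_nonneg N r hN hr i)),
        max_eq_right (row_nonpos N r hN hr j),
        sg_succ_ne r i hi, sg_succ_ne r j hj]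
    ring

lemma invar (N : ℕ) (hN : 2 ≤ N) :
    ∀ m i j, 1 ≤ i → i ≤ N+1 → 1 ≤ j → j ≤ N+1 →
      Bseq N m i j = sg (m % (N+1)) i * sg (m % (N+1)) j * b0 N i j := by
  intro m
  induction m with
  | zero =>
    intro i j hi1 hi2 hj1 hj2
    rw [Bseq, Nat.zero_mod]; simp only [sg]
    rw [if_neg (by omega : ¬ i ≤ 0), if_neg (by omega : ¬ j ≤ 0)]; ring
  | succ m ih =>
    intro i j hi1 hi2 hj1 hj2
    have hr : m % (N+1) ≤ N := by
      have := Nat.mod_lt m (show 0 < N+1 by omega); omega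
    have e1 := ih i j hi1 hi2 hj1 hj2
    have e2 := ih i (m % (N+1) + 1) hi1 hi2 (by omega) (by omega)
    have e3 := ih (m % (N+1) + 1) j (by omega) (by omega) hj1 hj2
    have hstep : Bseq N (m+1) i j
        = bmut (m % (N+1) + 1) (fun a b => sg (m % (N+1)) a * sg (m % (N+1)) b * b0 N a b) i j := by
      simp only [Bseq, bmut, e1, e2, e3]
    rw [hstep, step N (m % (N+1)) hN hr i j hi1 hi2 hj1 hj2]
    have hm : (m+1) % (N+1) = if m % (N+1) = N then 0 else m % (N+1) + 1 := by
      rw [Nat.add_mod]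
      split_ifs with h
      · rw [h, Nat.mod_eq_of_lt (by omega : 1 < N+1), Nat.mod_self]
      · rw [Nat.mod_eq_of_lt (by omega : 1 < N+1), Nat.mod_eq_of_lt (by omega)]
    rw [hm]
    split_ifs with h
    · simp only [sg]
      rw [if_pos (by omega : i ≤ m % (N+1) + 1), if_pos (by omega : j ≤ m % (N+1) + 1),
          if_neg (by omega : ¬ i ≤ 0), if_neg (by omega : ¬ j ≤ 0)]
      ring
    · rfl

theorem stmt1 (N : ℕ) (hN : 2 ≤ N) :
    ∀ m : ℕ, ∀ i j, 1 ≤ i → i ≤ N + 1 → 1 ≤ j → j ≤ N + 1 →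
      (if i = j then (2 : ℤ) else 0) - |Bseq N m i j| = cartanA N i j := by
  intro m i j hi1 hi2 hj1 hj2
  rw [invar N hN m i j hi1 hi2 hj1 hj2, abs_mul, abs_mul, sg_abs, sg_abs, one_mul, one_mul]
  simp only [b0, cartanA]
  split_ifs <;> (try norm_num) <;> omega
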